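/- arXiv:1210.7415 — 4 statements merged into one kernel-verified Lean document; each statement's English description precedes it below -/
import Mathlib

section
/- Let n ≥ 1 and let d_1, …, d_n be real numbers with 0 ≤ d_j ≤ 1. In the ring of 2×2 matrices with entries in the polynomial ring ℝ[q_0, …, q_{n−1}], set M = (I + d_n A)(B_0 + q_{n−1} B_1)(I + d_{n−1} A)(B_0 + q_{n−2} B_1) ⋯ (I + d_1 A)(B_0 + q_0 B_1), where A = [[0,1],[1,0]], B_0 = [[0,0],[0,1]], B_1 = [[1,0],[0,0]], and write M = [[a, b],[c, d]]. Let P = Π_{j=1}^n (1 + d_j) and p = Π_{j=1}^n (1 − d_j). Then: (i) each of the polynomials a, b, c, d has nonnegative coefficients; (ii) a(1,…,1) = d(1,…,1) = (P + p)/2 and b(1,…,1) = c(1,…,1) = (P − p)/2 (so, since the coefficients are nonnegative, these values equal the sums of the absolute values of the coefficients of a, d, b, c respectively); (iii) the coefficient of the monomial q_0 q_1 ⋯ q_{n−1} in a equals 1; (iv) the constant coefficient of d equals 1. -/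
open Matrix MvPolynomial

noncomputable section

/-- The matrix `A = [[0,1],[1,0]]` over `ℝ[q_0,…,q_{n-1}]`. -/
def Amat (n : ℕ) : Matrix (Fin 2) (Fin 2) (MvPolynomial (Fin n) ℝ) := !![0, 1; 1, 0]

/-- The matrix `B₀ = [[0,0],[0,1]]` over `ℝ[q_0,…,q_{n-1}]`. -/
def B0mat (n : ℕ) : Matrix (Fin 2) (Fin 2) (MvPolynomial (Fin n) ℝ) := !![0, 0; 0, 1]

/-- The matrix `B₁ = [[1,0],[0,0]]` over `ℝ[q_0,…,q_{n-1}]`. -/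
def B1mat (n : ℕ) : Matrix (Fin 2) (Fin 2) (MvPolynomial (Fin n) ℝ) := !![1, 0; 0, 0]

/-- The transfer matrix `M = (I + dₙA)(B₀ + q_{n-1}B₁) ⋯ (I + d₁A)(B₀ + q₀B₁)`
(indices written `0,…,n-1` in Lean). -/
def transferM (n : ℕ) (d : Fin n → ℝ) : Matrix (Fin 2) (Fin 2) (MvPolynomial (Fin n) ℝ) :=
  (List.ofFn fun j : Fin n =>
      ((1 : Matrix (Fin 2) (Fin 2) (MvPolynomial (Fin n) ℝ)) + (C (d j) : MvPolynomial (Fin n) ℝ) • Amat n) *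
        (B0mat n + (X j : MvPolynomial (Fin n) ℝ) • B1mat n)).reverse.prod

namespace TransferAux

variable {n : ℕ}

lemma symm_apply (f : Fin n → ℕ) (j : Fin n) :
    (Finsupp.equivFunOnFinite.symm f) j = f j := rfl

/-- nonnegative coefficients -/
def NN (p : MvPolynomial (Fin n) ℝ) : Prop := ∀ m, 0 ≤ coeff m p

lemma NN.add {p q : MvPolynomial (Fin n) ℝ} (hp : NN p) (hq : NN q) : NN (p + q) := fun m => by
  rw [coeff_add]; exact add_nonneg (hp m) (hq m)

lemma NN.mul {p q : MvPolynomial (Fin n) ℝ} (hp : NN p) (hq : NN q) : NN (p * q) := fun m => by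
  classical
  rw [coeff_mul]; exact Finset.sum_nonneg fun x _ => mul_nonneg (hp _) (hq _)

lemma NN.zero : NN (0 : MvPolynomial (Fin n) ℝ) := fun m => by simp

lemma NN.one : NN (1 : MvPolynomial (Fin n) ℝ) := fun m => by
  classical
  rw [coeff_one]; split <;> norm_num

lemma NN.C {c : ℝ} (hc : 0 ≤ c) : NN (MvPolynomial.C c : MvPolynomial (Fin n) ℝ) := fun m => by
  classical
  rw [coeff_C]; split <;> simp [hc]

lemma NN.X (j : Fin n) : NN (MvPolynomial.X j : MvPolynomial (Fin n) ℝ) := fun m => by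
  classical
  rw [coeff_X']; split <;> norm_num

lemma NN.sum {s : Finset (Fin 2)} {f : Fin 2 → MvPolynomial (Fin n) ℝ}
    (h : ∀ i ∈ s, NN (f i)) : NN (∑ i ∈ s, f i) :=
  Finset.sum_induction f NN (fun _ _ => NN.add) NN.zero h

/-- matrices with entrywise nonnegative coefficients -/
def NNM (M : Matrix (Fin 2) (Fin 2) (MvPolynomial (Fin n) ℝ)) : Prop := ∀ i j, NN (M i j)

lemma NNM.mul {M N : Matrix (Fin 2) (Fin 2) (MvPolynomial (Fin n) ℝ)}
    (hM : NNM M) (hN : NNM N) : NNM (M * N) := fun i j => by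
  rw [Matrix.mul_apply]
  exact NN.sum fun k _ => (hM i k).mul (hN k j)

lemma NNM.one : NNM (1 : Matrix (Fin 2) (Fin 2) (MvPolynomial (Fin n) ℝ)) := fun i j => by
  rcases eq_or_ne i j with h | h
  · subst h; rw [Matrix.one_apply_eq]; exact NN.one
  · rw [Matrix.one_apply_ne h]; exact NN.zero

lemma NNM.list_prod (l : List (Matrix (Fin 2) (Fin 2) (MvPolynomial (Fin n) ℝ)))
    (h : ∀ M ∈ l, NNM M) : NNM l.prod := by
  induction l with
  | nil => simpa using NNM.one
  | cons a t ih =>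
      rw [List.prod_cons]
      exact (h a List.mem_cons_self).mul (ih fun M hM => h M (List.mem_cons_of_mem a hM))

/-- the single factor of the transfer matrix -/
lemma factor_eq (d : Fin n → ℝ) (j : Fin n) :
    ((1 : Matrix (Fin 2) (Fin 2) (MvPolynomial (Fin n) ℝ)) + (C (d j) : MvPolynomial (Fin n) ℝ) • Amat n) *
        (B0mat n + (X j : MvPolynomial (Fin n) ℝ) • B1mat n)
      = !![X j, C (d j); C (d j) * X j, 1] := by
  ext i k
  fin_cases i <;> fin_cases k <;>
    simp [Amat, B0mat, B1mat, Matrix.mul_apply, Fin.sum_univ_two, Matrix.one_apply]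

/-- variables all below `k` -/
def Supp (k : ℕ) (p : MvPolynomial (Fin n) ℝ) : Prop :=
  ∀ m, coeff m p ≠ 0 → ∀ l : Fin n, k ≤ (l : ℕ) → m l = 0

lemma Supp.add {k : ℕ} {p q : MvPolynomial (Fin n) ℝ} (hp : Supp k p) (hq : Supp k q) :
    Supp k (p + q) := by
  intro m hm l hl
  rw [coeff_add] at hm
  rcases ne_or_eq (coeff m p) 0 with h | h
  · exact hp m h l hl
  · exact hq m (by simpa [h] using hm) l hl

lemma Supp.C_mul {k : ℕ} {c : ℝ} {p : MvPolynomial (Fin n) ℝ} (hp : Supp k p) :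
    Supp k (MvPolynomial.C c * p) := by
  intro m hm l hl
  rw [coeff_C_mul] at hm
  exact hp m (right_ne_zero_of_mul hm) l hl

lemma Supp.mono {k k' : ℕ} (h : k ≤ k') {p : MvPolynomial (Fin n) ℝ} (hp : Supp k p) :
    Supp k' p := fun m hm l hl => hp m hm l (h.trans hl)

lemma Supp.X_mul {k : ℕ} {j : Fin n} (hj : (j : ℕ) < k + 1) {p : MvPolynomial (Fin n) ℝ}
    (hp : Supp k p) : Supp (k + 1) (MvPolynomial.X j * p) := by
  classical
  intro m hm l hl
  rw [coeff_X_mul'] at hm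
  split at hm
  · have h0 := hp _ hm l (Nat.le_of_succ_le hl)
    have hjl : j ≠ l := by
      intro h
      subst h
      omega
    rw [Finsupp.tsub_apply, Finsupp.single_apply, if_neg hjl] at h0
    simpa using h0
  · exact absurd rfl hm

lemma Supp.one {k : ℕ} : Supp k (1 : MvPolynomial (Fin n) ℝ) := by
  classical
  intro m hm l _
  rw [coeff_one] at hm
  split at hm
  · next h => rw [← h]; rfl
  · exact absurd rfl hm

end TransferAux

open TransferAux

/-- Properties of the entries `a = M₀₀`, `b = M₀₁`, `c = M₁₀`, `d = M₁₁` of the transfer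
matrix: nonnegative coefficients, values at `q = (1,…,1)` equal to `(P±p)/2`, the coefficient
of `q₀⋯q_{n-1}` in `a` is `1`, and the constant coefficient of `d` is `1`. -/
theorem transferM_entries (n : ℕ) (hn : 1 ≤ n) (d : Fin n → ℝ)
    (hd : ∀ j, 0 ≤ d j ∧ d j ≤ 1) :
    (∀ (i j : Fin 2) (mono : Fin n →₀ ℕ), 0 ≤ coeff mono (transferM n d i j)) ∧
    eval (fun _ => (1 : ℝ)) (transferM n d 0 0) = (∏ j, (1 + d j) + ∏ j, (1 - d j)) / 2 ∧
    eval (fun _ => (1 : ℝ)) (transferM n d 1 1) = (∏ j, (1 + d j) + ∏ j, (1 - d j)) / 2 ∧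
    eval (fun _ => (1 : ℝ)) (transferM n d 0 1) = (∏ j, (1 + d j) - ∏ j, (1 - d j)) / 2 ∧
    eval (fun _ => (1 : ℝ)) (transferM n d 1 0) = (∏ j, (1 + d j) - ∏ j, (1 - d j)) / 2 ∧
    coeff (Finsupp.equivFunOnFinite.symm fun _ => 1) (transferM n d 0 0) = 1 ∧
    coeff 0 (transferM n d 1 1) = 1 := by
  classical
  set g : Fin n → Matrix (Fin 2) (Fin 2) (MvPolynomial (Fin n) ℝ) := fun j =>
    ((1 : Matrix (Fin 2) (Fin 2) (MvPolynomial (Fin n) ℝ)) + (C (d j) : MvPolynomial (Fin n) ℝ) • Amat n) *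
      (B0mat n + (X j : MvPolynomial (Fin n) ℝ) • B1mat n) with hg
  -- nonnegativity
  have hNN : ∀ i j, NN (transferM n d i j) := by
    intro i j
    refine NNM.list_prod _ (fun M hM => ?_) i j
    rw [List.mem_reverse, List.mem_ofFn] at hM
    obtain ⟨l, rfl⟩ := hM
    show NNM (((1 : Matrix (Fin 2) (Fin 2) (MvPolynomial (Fin n) ℝ)) +
      (C (d l) : MvPolynomial (Fin n) ℝ) • Amat n) *
      (B0mat n + (X l : MvPolynomial (Fin n) ℝ) • B1mat n))
    rw [factor_eq d l]
    intro i' j'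
    fin_cases i' <;> fin_cases j' <;> simp only [Matrix.cons_val', Matrix.cons_val_zero,
      Matrix.cons_val_one, Matrix.head_cons, Matrix.head_fin_const, Matrix.of_apply,
      Matrix.cons_val_fin_one]
    · exact NN.X l
    · exact NN.C (hd l).1
    · exact (NN.C (hd l).1).mul (NN.X l)
    · exact NN.one
  -- partial products
  set Mk : ℕ → Matrix (Fin 2) (Fin 2) (MvPolynomial (Fin n) ℝ) := fun k =>
    ((List.ofFn g).take k).reverse.prod with hMk
  have hMn : transferM n d = Mk n := by
    have h1 : (List.ofFn g).take n = List.ofFn g := by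
      apply List.take_of_length_le
      simp
    rw [hMk]
    simp only [h1]
    rfl
  have hstep : ∀ k (hk : k < n), Mk (k + 1) = g ⟨k, hk⟩ * Mk k := by
    intro k hk
    have h1 : (List.ofFn g).take (k + 1) = (List.ofFn g).take k ++ [g ⟨k, hk⟩] := by
      rw [List.take_succ]
      congr 1
      simp [List.getElem?_ofFn, hk]
    rw [hMk]
    simp only [h1, List.reverse_append, List.reverse_singleton, List.singleton_append,
      List.prod_cons]
  -- invariant
  set P : ℕ → ℝ := fun k => ∏ j ∈ Finset.univ.filter (fun j : Fin n => (j : ℕ) < k), (1 + d j)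
    with hP
  set p : ℕ → ℝ := fun k => ∏ j ∈ Finset.univ.filter (fun j : Fin n => (j : ℕ) < k), (1 - d j)
    with hp
  set mk : ℕ → (Fin n →₀ ℕ) := fun k =>
    Finsupp.equivFunOnFinite.symm fun j => if (j : ℕ) < k then 1 else 0 with hmk
  have key : ∀ k, k ≤ n →
      eval (fun _ => (1 : ℝ)) (Mk k 0 0) = (P k + p k) / 2 ∧
      eval (fun _ => (1 : ℝ)) (Mk k 1 1) = (P k + p k) / 2 ∧
      eval (fun _ => (1 : ℝ)) (Mk k 0 1) = (P k - p k) / 2 ∧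
      eval (fun _ => (1 : ℝ)) (Mk k 1 0) = (P k - p k) / 2 ∧
      coeff (mk k) (Mk k 0 0) = 1 ∧
      coeff 0 (Mk k 1 1) = 1 ∧
      (∀ i j, Supp k (Mk k i j)) := by
    intro k
    induction k with
    | zero =>
        intro _
        have hM0 : Mk 0 = 1 := by simp [hMk]
        have hfilt : Finset.univ.filter (fun j : Fin n => (j : ℕ) < 0) = ∅ := by
          ext j; simp
        have hm0 : mk 0 = 0 := by
          ext j; simp [hmk, symm_apply]
        rw [hM0, hm0, hP, hp]
        simp only [hfilt, Finset.prod_empty]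
        refine ⟨?_, ?_, ?_, ?_, ?_, ?_, ?_⟩
        · rw [Matrix.one_apply_eq]; norm_num
        · rw [Matrix.one_apply_eq]; norm_num
        · rw [Matrix.one_apply_ne (by decide)]; norm_num
        · rw [Matrix.one_apply_ne (by decide)]; norm_num
        · rw [Matrix.one_apply_eq]; exact coeff_zero_one
        · rw [Matrix.one_apply_eq]; exact coeff_zero_one
        · intro i j
          rcases eq_or_ne i j with h | h
          · rw [h, Matrix.one_apply_eq]; exact Supp.one
          · rw [Matrix.one_apply_ne h]; intro m hm; simp at hm
    | succ k ih =>
        intro hk1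
        have hk : k < n := hk1
        obtain ⟨ha, hdd, hb, hc, hca, hcd, hsupp⟩ := ih (Nat.le_of_succ_le hk1)
        set jk : Fin n := ⟨k, hk⟩ with hjk
        have hv : (jk : ℕ) = k := rfl
        have hfac : g jk = !![X jk, C (d jk); C (d jk) * X jk, 1] := factor_eq d jk
        have e00 : Mk (k + 1) 0 0 = X jk * Mk k 0 0 + C (d jk) * Mk k 1 0 := by
          rw [hstep k hk, ← hjk, hfac, Matrix.mul_apply, Fin.sum_univ_two]
          simp
        have e01 : Mk (k + 1) 0 1 = X jk * Mk k 0 1 + C (d jk) * Mk k 1 1 := by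
          rw [hstep k hk, ← hjk, hfac, Matrix.mul_apply, Fin.sum_univ_two]
          simp
        have e10 : Mk (k + 1) 1 0 = C (d jk) * (X jk * Mk k 0 0) + Mk k 1 0 := by
          rw [hstep k hk, ← hjk, hfac, Matrix.mul_apply, Fin.sum_univ_two]
          simp [mul_assoc]
        have e11 : Mk (k + 1) 1 1 = C (d jk) * (X jk * Mk k 0 1) + Mk k 1 1 := by
          rw [hstep k hk, ← hjk, hfac, Matrix.mul_apply, Fin.sum_univ_two]
          simp [mul_assoc]
        have hfilt : Finset.univ.filter (fun j : Fin n => (j : ℕ) < k + 1)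
            = insert jk (Finset.univ.filter (fun j : Fin n => (j : ℕ) < k)) := by
          ext j
          simp only [Finset.mem_filter, Finset.mem_univ, true_and, Finset.mem_insert,
            Fin.ext_iff, hv]
          omega
        have hjknot : jk ∉ Finset.univ.filter (fun j : Fin n => (j : ℕ) < k) := by
          simp [hv]
        have hPk : P (k + 1) = (1 + d jk) * P k := by
          rw [hP]; simp only [hfilt]; rw [Finset.prod_insert hjknot]
        have hpk : p (k + 1) = (1 - d jk) * p k := by
          rw [hp]; simp only [hfilt]; rw [Finset.prod_insert hjknot]
        have hmk1 : mk (k + 1) = Finsupp.single jk 1 + mk k := by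
          ext j
          simp only [hmk, Finsupp.add_apply, Finsupp.single_apply, symm_apply]
          by_cases hjj : jk = j
          · subst hjj
            simp [hv]
          · rw [if_neg hjj]
            have hne : (j : ℕ) ≠ k := fun hh => hjj (Fin.ext (by rw [hv, hh]))
            split_ifs <;> omega
        refine ⟨?_, ?_, ?_, ?_, ?_, ?_, ?_⟩
        · rw [e00]
          simp only [eval_add, eval_mul, eval_X, eval_C, ha, hc, hPk, hpk]
          ring
        · rw [e11]
          simp only [eval_add, eval_mul, eval_X, eval_C, hdd, hb, hPk, hpk]
          ring
        · rw [e01]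
          simp only [eval_add, eval_mul, eval_X, eval_C, hb, hdd, hPk, hpk]
          ring
        · rw [e10]
          simp only [eval_add, eval_mul, eval_X, eval_C, ha, hc, hPk, hpk]
          ring
        · rw [e00, coeff_add, hmk1, coeff_X_mul, hca, coeff_C_mul]
          have hz : coeff (Finsupp.single jk 1 + mk k) (Mk k 1 0) = 0 := by
            by_contra hz
            have h0 := hsupp 1 0 _ hz jk (by omega)
            rw [Finsupp.add_apply, Finsupp.single_eq_same] at h0
            omega
          rw [hz]
          ring
        · rw [e11, coeff_add, coeff_C_mul, hcd]
          have hz : coeff 0 (X jk * Mk k 0 1) = 0 := by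
            rw [coeff_X_mul']
            rw [if_neg (by simp)]
          rw [hz]
          ring
        · have hX : ∀ q : MvPolynomial (Fin n) ℝ, Supp k q → Supp (k + 1) (X jk * q) :=
            fun q hq => Supp.X_mul (by omega) hq
          have s00 : Supp (k + 1) (Mk (k + 1) 0 0) := by
            rw [e00]
            exact (hX _ (hsupp 0 0)).add ((hsupp 1 0).mono (Nat.le_succ k)).C_mul
          have s01 : Supp (k + 1) (Mk (k + 1) 0 1) := by
            rw [e01]
            exact (hX _ (hsupp 0 1)).add ((hsupp 1 1).mono (Nat.le_succ k)).C_mul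
          have s10 : Supp (k + 1) (Mk (k + 1) 1 0) := by
            rw [e10]
            exact (hX _ (hsupp 0 0)).C_mul.add ((hsupp 1 0).mono (Nat.le_succ k))
          have s11 : Supp (k + 1) (Mk (k + 1) 1 1) := by
            rw [e11]
            exact (hX _ (hsupp 0 1)).C_mul.add ((hsupp 1 1).mono (Nat.le_succ k))
          intro i j
          fin_cases i <;> fin_cases j
          exacts [s00, s01, s10, s11]
  obtain ⟨ha, hdd, hb, hc, hca, hcd, _⟩ := key n (le_refl n)
  have hfiltn : Finset.univ.filter (fun j : Fin n => (j : ℕ) < n) = Finset.univ := by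
    ext j; simp [j.isLt]
  have hPn : P n = ∏ j, (1 + d j) := by rw [hP]; simp only [hfiltn]
  have hpn : p n = ∏ j, (1 - d j) := by rw [hp]; simp only [hfiltn]
  have hmkn : mk n = Finsupp.equivFunOnFinite.symm fun _ => 1 := by
    ext j
    simp only [hmk, symm_apply]
    simp [j.isLt]
  rw [hMn] at hNN ⊢
  exact ⟨fun i j m => hNN i j m, by rw [ha, hPn, hpn], by rw [hdd, hPn, hpn],
    by rw [hb, hPn, hpn], by rw [hc, hPn, hpn], by rw [← hmkn]; exact hca, hcd⟩

end
end

section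
/- Let n ≥ 1, let t_1, …, t_n be positive real numbers with t_1 + ⋯ + t_n = x, and set d_j = tanh t_j. With M = (I + d_n A)(B_0 + q_{n−1} B_1) ⋯ (I + d_1 A)(B_0 + q_0 B_1) = [[a, b],[c, d]] as a 2×2 matrix over ℝ[q_0, …, q_{n−1}], where A = [[0,1],[1,0]], B_0 = [[0,0],[0,1]], B_1 = [[1,0],[0,0]], the following hold: (i) a, b, c, d have nonnegative coefficients; (ii) a(1,…,1) = d(1,…,1) < cosh x and b(1,…,1) = c(1,…,1) < sinh x; (iii) the coefficient of q_0 q_1 ⋯ q_{n−1} in a equals 1; (iv) the constant coefficient of d equals 1. -/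
open Matrix MvPolynomial

noncomputable section

/-! ### Auxiliary material -/

/-- The `j`-th factor of the transfer matrix, computed explicitly. -/
def Fm (n : ℕ) (d : Fin n → ℝ) (j : Fin n) : Matrix (Fin 2) (Fin 2) (MvPolynomial (Fin n) ℝ) :=
  !![X j, C (d j); C (d j) * X j, 1]

lemma factor_eq (n : ℕ) (d : Fin n → ℝ) (j : Fin n) :
    ((1 : Matrix (Fin 2) (Fin 2) (MvPolynomial (Fin n) ℝ)) +
        (C (d j) : MvPolynomial (Fin n) ℝ) • Amat n) *
      (B0mat n + (X j : MvPolynomial (Fin n) ℝ) • B1mat n) = Fm n d j := by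
  ext i k
  fin_cases i <;> fin_cases k <;>
    simp [Amat, B0mat, B1mat, Fm, Matrix.mul_apply, Fin.sum_univ_two, Matrix.one_apply, mul_comm]

lemma transferM_eq (n : ℕ) (d : Fin n → ℝ) :
    transferM n d = (List.ofFn (Fm n d)).reverse.prod := by
  unfold transferM
  congr 1
  congr 1
  exact congrArg List.ofFn (funext fun j => factor_eq n d j)

variable {n : ℕ}

lemma Fm00 (d : Fin n → ℝ) (p : Fin n) : Fm n d p 0 0 = X p := by simp [Fm]
lemma Fm01 (d : Fin n → ℝ) (p : Fin n) : Fm n d p 0 1 = C (d p) := by simp [Fm]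
lemma Fm10 (d : Fin n → ℝ) (p : Fin n) : Fm n d p 1 0 = C (d p) * X p := by simp [Fm]
lemma Fm11 (d : Fin n → ℝ) (p : Fin n) : Fm n d p 1 1 = 1 := by simp [Fm]

lemma vars_Fm (d : Fin n → ℝ) (p : Fin n) (i a : Fin 2) : (Fm n d p i a).vars ⊆ {p} := by
  fin_cases i <;> fin_cases a <;> simp only [Fin.zero_eta, Fin.mk_one]
  · rw [Fm00]; exact (vars_X (R := ℝ)).le
  · rw [Fm01]; simp [vars_C]
  · rw [Fm10]
    refine (vars_mul _ _).trans ?_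
    simp [vars_C, vars_X]
  · rw [Fm11]; simp [vars_one]

/-- Partial products of the factors. -/
def Pm (n : ℕ) (d : Fin n → ℝ) (k : ℕ) : Matrix (Fin 2) (Fin 2) (MvPolynomial (Fin n) ℝ) :=
  ((List.ofFn (Fm n d)).take k).reverse.prod

/-- The monomial `q_0 ⋯ q_{k-1}`. -/
def mu (n k : ℕ) : Fin n →₀ ℕ :=
  Finsupp.equivFunOnFinite.symm (fun j : Fin n => if (j : ℕ) < k then 1 else 0)

lemma mu_apply (k : ℕ) (j : Fin n) : mu n k j = if (j : ℕ) < k then 1 else 0 := rfl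

lemma mu_succ (k : ℕ) (hk : k < n) :
    mu n (k + 1) = Finsupp.single ⟨k, hk⟩ 1 + mu n k := by
  ext j
  rw [Finsupp.add_apply, mu_apply, mu_apply, Finsupp.single_apply]
  have h1 : ((⟨k, hk⟩ : Fin n) = j) ↔ ((j : ℕ) = k) := by
    rw [Fin.ext_iff]; simp [eq_comm]
  rw [if_congr h1 rfl rfl]
  split_ifs <;> omega

lemma Pm_succ (d : Fin n → ℝ) (k : ℕ) (hk : k < n) :
    Pm n d (k + 1) = Fm n d ⟨k, hk⟩ * Pm n d k := by
  unfold Pm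
  rw [List.take_succ]
  have : (List.ofFn (Fm n d))[k]? = some (Fm n d ⟨k, hk⟩) := by
    simp [List.getElem?_ofFn, hk]
  rw [this]
  simp

lemma Pm_invariant (d : Fin n → ℝ) (k : ℕ) (hk : k ≤ n) :
    (∀ i j : Fin 2, ∀ l : Fin n, l ∈ (Pm n d k i j).vars → (l : ℕ) < k) ∧
      coeff (mu n k) (Pm n d k 0 0) = 1 := by
  induction k with
  | zero =>
    constructor
    · intro i j l hl
      exfalso
      unfold Pm at hl
      simp only [List.take_zero, List.reverse_nil, List.prod_nil] at hl
      rcases eq_or_ne i j with rfl | hij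
      · rw [Matrix.one_apply_eq] at hl; simp [vars_one] at hl
      · rw [Matrix.one_apply_ne hij] at hl; simp at hl
    · have : mu n 0 = 0 := by ext j; simp [mu_apply]
      rw [this]
      unfold Pm
      simp [Matrix.one_apply_eq]
  | succ k ih =>
    have hk' : k < n := hk
    obtain ⟨hv, hc⟩ := ih (le_of_lt hk')
    rw [Pm_succ d k hk']
    have hmul : ∀ i j : Fin 2, (Fm n d ⟨k, hk'⟩ * Pm n d k) i j =
        Fm n d ⟨k, hk'⟩ i 0 * Pm n d k 0 j + Fm n d ⟨k, hk'⟩ i 1 * Pm n d k 1 j := by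
      intro i j; rw [Matrix.mul_apply, Fin.sum_univ_two]
    constructor
    · intro i j l hl
      rw [hmul] at hl
      have key : ∀ (a : Fin 2), l ∈ (Fm n d ⟨k, hk'⟩ i a * Pm n d k a j).vars → (l:ℕ) < k + 1 := by
        intro a hab
        rcases Finset.mem_union.mp (vars_mul _ _ hab) with h | h
        · have := Finset.mem_singleton.mp (vars_Fm d ⟨k, hk'⟩ i a h)
          rw [this]; simp
        · exact Nat.lt_succ_of_lt (hv _ _ l h)
      rcases Finset.mem_union.mp (vars_add_subset _ _ hl) with h | h
      · exact key 0 h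
      · exact key 1 h
    · rw [hmul 0 0, Fm00, Fm01, coeff_add, mu_succ k hk']
      have e1 : coeff (Finsupp.single ⟨k, hk'⟩ 1 + mu n k) (X (⟨k, hk'⟩ : Fin n) * Pm n d k 0 0)
          = coeff (mu n k) (Pm n d k 0 0) :=
        coeff_X_mul (mu n k) (⟨k, hk'⟩ : Fin n) (Pm n d k 0 0)
      have e2 : coeff (Finsupp.single ⟨k, hk'⟩ 1 + mu n k) (C (d ⟨k, hk'⟩) * Pm n d k 1 0) = 0 := by
        rw [coeff_C_mul]
        have hz : coeff (Finsupp.single ⟨k, hk'⟩ 1 + mu n k) (Pm n d k 1 0) = 0 := by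
          by_contra hne
          have hmem : (⟨k, hk'⟩ : Fin n) ∈ (Pm n d k 1 0).vars :=
            (mem_vars _).mpr ⟨_, MvPolynomial.mem_support_iff.mpr hne,
              Finsupp.mem_support_iff.mpr (by simp)⟩
          exact absurd (hv 1 0 _ hmem) (by simp)
        rw [hz, mul_zero]
      rw [e1, e2, hc, add_zero]

lemma coeff_nonneg_mul {p q : MvPolynomial (Fin n) ℝ}
    (hp : ∀ m, 0 ≤ coeff m p) (hq : ∀ m, 0 ≤ coeff m q) (m : Fin n →₀ ℕ) :
    0 ≤ coeff m (p * q) := by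
  rw [coeff_mul]
  exact Finset.sum_nonneg fun x _ => mul_nonneg (hp x.1) (hq x.2)

lemma nn_prod (l : List (Matrix (Fin 2) (Fin 2) (MvPolynomial (Fin n) ℝ)))
    (h : ∀ M ∈ l, ∀ (i j : Fin 2) (m : Fin n →₀ ℕ), 0 ≤ coeff m (M i j)) :
    ∀ (i j : Fin 2) (m : Fin n →₀ ℕ), 0 ≤ coeff m (l.prod i j) := by
  induction l with
  | nil =>
    intro i j m
    simp only [List.prod_nil]
    rcases eq_or_ne i j with rfl | hij
    · simp [Matrix.one_apply_eq]
      rcases eq_or_ne m 0 with rfl | hm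
      · simp
      · simp [coeff_one, hm, Ne.symm hm]
    · simp [Matrix.one_apply_ne hij]
  | cons a l ih =>
    intro i j m
    rw [List.prod_cons, Matrix.mul_apply]
    rw [MvPolynomial.coeff_sum]
    refine Finset.sum_nonneg fun k _ => coeff_nonneg_mul (h a (by simp) i k)
      (ih (fun M hM => h M (by simp [hM])) k j) m

lemma row_inv (l : List (Matrix (Fin 2) (Fin 2) ℝ))
    (h : ∀ M ∈ l, M 1 0 = 0 ∧ M 1 1 = 1) :
    l.prod 1 0 = 0 ∧ l.prod 1 1 = 1 := by
  induction l with
  | nil => simp [Matrix.one_apply]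
  | cons a l ih =>
    have ha := h a (by simp)
    have hl := ih fun M hM => h M (by simp [hM])
    constructor <;>
      simp [List.prod_cons, Matrix.mul_apply, Fin.sum_univ_two, ha.1, ha.2, hl.1, hl.2]

lemma hyp_prod (n : ℕ) (t : Fin n → ℝ) :
    (List.ofFn fun j : Fin n => !![(1:ℝ), Real.tanh (t j); Real.tanh (t j), 1]).reverse.prod =
      (∏ j, (Real.cosh (t j))⁻¹) •
        !![Real.cosh (∑ j, t j), Real.sinh (∑ j, t j);
           Real.sinh (∑ j, t j), Real.cosh (∑ j, t j)] := by
  induction n with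
  | zero => simp [Matrix.one_fin_two]
  | succ m ih =>
    rw [List.ofFn_succ, List.reverse_cons, List.prod_append, List.prod_singleton,
      ih (fun i => t i.succ), Fin.sum_univ_succ, Fin.prod_univ_succ]
    have h0 := (Real.cosh_pos (t 0)).ne'
    have hS := (Real.cosh_pos (∑ i : Fin m, t i.succ)).ne'
    rw [Matrix.smul_mul, Matrix.mul_fin_two]
    ext i k
    fin_cases i <;> fin_cases k <;>
      · simp only [Matrix.smul_apply, Matrix.cons_val', Matrix.cons_val_zero, Matrix.cons_val_one,
          Matrix.head_cons, Matrix.head_fin_const, Matrix.empty_val', Matrix.cons_val_fin_one,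
          smul_eq_mul, Real.cosh_add, Real.sinh_add, Real.tanh_eq_sinh_div_cosh,
          Fin.zero_eta, Fin.mk_one, Matrix.of_apply]
        field_simp
        all_goals ring

lemma map_Fm_eval (d : Fin n → ℝ) (j : Fin n) :
    (Fm n d j).map (eval fun _ => (1:ℝ)) = !![1, d j; d j, 1] := by
  ext i k
  fin_cases i <;> fin_cases k <;> simp [Fm, Matrix.map_apply]

lemma map_Fm_cc (d : Fin n → ℝ) (j : Fin n) :
    (Fm n d j).map (constantCoeff) = !![0, d j; 0, 1] := by
  ext i k
  fin_cases i <;> fin_cases k <;> simp [Fm, Matrix.map_apply]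

/-- For `dⱼ = tanh tⱼ` with `tⱼ > 0` and `∑ tⱼ = x`, the entries of the transfer matrix have
nonnegative coefficients, `a(1,…,1) = d(1,…,1) < cosh x`, `b(1,…,1) = c(1,…,1) < sinh x`,
the coefficient of `q₀⋯q_{n-1}` in `a` is `1` and the constant coefficient of `d` is `1`. -/
theorem transferM_entries_tanh (n : ℕ) (hn : 1 ≤ n) (x : ℝ) (t : Fin n → ℝ)
    (ht : ∀ j, 0 < t j) (hx : ∑ j, t j = x) :
    (∀ (i j : Fin 2) (mono : Fin n →₀ ℕ),
        0 ≤ coeff mono (transferM n (fun j => Real.tanh (t j)) i j)) ∧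
    eval (fun _ => (1 : ℝ)) (transferM n (fun j => Real.tanh (t j)) 0 0) =
      eval (fun _ => (1 : ℝ)) (transferM n (fun j => Real.tanh (t j)) 1 1) ∧
    eval (fun _ => (1 : ℝ)) (transferM n (fun j => Real.tanh (t j)) 0 0) < Real.cosh x ∧
    eval (fun _ => (1 : ℝ)) (transferM n (fun j => Real.tanh (t j)) 0 1) =
      eval (fun _ => (1 : ℝ)) (transferM n (fun j => Real.tanh (t j)) 1 0) ∧
    eval (fun _ => (1 : ℝ)) (transferM n (fun j => Real.tanh (t j)) 0 1) < Real.sinh x ∧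
    coeff (Finsupp.equivFunOnFinite.symm fun _ => 1)
      (transferM n (fun j => Real.tanh (t j)) 0 0) = 1 ∧
    coeff 0 (transferM n (fun j => Real.tanh (t j)) 1 1) = 1 := by
  set d : Fin n → ℝ := fun j => Real.tanh (t j) with hd
  have hM : transferM n d = (List.ofFn (Fm n d)).reverse.prod := transferM_eq n d
  have hne : (Finset.univ : Finset (Fin n)).Nonempty := Finset.univ_nonempty_iff.mpr
    ⟨⟨0, hn⟩⟩
  -- the scalar c = ∏ (cosh t j)⁻¹ ∈ (0, 1)
  set c : ℝ := ∏ j, (Real.cosh (t j))⁻¹ with hcdef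
  have hc_pos : 0 < c := Finset.prod_pos fun j _ => inv_pos.mpr (Real.cosh_pos _)
  have hc_lt : c < 1 := by
    have h1 : 1 < ∏ j, Real.cosh (t j) := by
      have := Finset.prod_lt_prod_of_nonempty (f := fun _ : Fin n => (1:ℝ))
        (g := fun j => Real.cosh (t j)) (s := Finset.univ)
        (by intro i _; norm_num) (fun i _ => Real.one_lt_cosh.mpr (ht i).ne') hne
      simpa using this
    calc c = (∏ j, Real.cosh (t j))⁻¹ := by rw [hcdef, Finset.prod_inv_distrib]
      _ < 1 := inv_lt_one_of_one_lt₀ h1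
  have hxpos : 0 < x := hx ▸ Finset.sum_pos (fun j _ => ht j) hne
  -- evaluation at all-ones
  have heval : ∀ i j : Fin 2, eval (fun _ => (1 : ℝ)) (transferM n d i j) =
      (c • !![Real.cosh x, Real.sinh x; Real.sinh x, Real.cosh x]) i j := by
    have hmap : (RingHom.mapMatrix (eval fun _ => (1:ℝ))) (transferM n d) =
        c • !![Real.cosh x, Real.sinh x; Real.sinh x, Real.cosh x] := by
      rw [hM, map_list_prod, List.map_reverse, List.map_ofFn]
      have hfn : ((RingHom.mapMatrix (eval fun _ => (1:ℝ))) ∘ Fm n d) =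
          fun j : Fin n => !![(1:ℝ), Real.tanh (t j); Real.tanh (t j), 1] := by
        funext j
        simp only [Function.comp_apply, RingHom.mapMatrix_apply]
        exact map_Fm_eval d j
      rw [hfn, hyp_prod n t, hx]
    intro i j
    have := congrFun (congrFun (congrArg (fun M => (M : Matrix (Fin 2) (Fin 2) ℝ)) hmap) i) j
    simpa [RingHom.mapMatrix_apply, Matrix.map_apply] using this
  refine ⟨?_, ?_, ?_, ?_, ?_, ?_, ?_⟩
  · -- nonnegativity of coefficients
    intro i j m
    rw [hM]
    refine nn_prod _ ?_ i j m
    intro M hMl i' j' m'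
    rw [List.mem_reverse, List.mem_ofFn] at hMl
    obtain ⟨p, rfl⟩ := hMl
    have htanh : 0 ≤ d p := by
      show 0 ≤ Real.tanh (t p)
      rw [Real.tanh_eq_sinh_div_cosh]
      exact div_nonneg (Real.sinh_pos_iff.mpr (ht p)).le (Real.cosh_pos _).le
    fin_cases i' <;> fin_cases j' <;>
      simp only [Fin.zero_eta, Fin.mk_one, Fm00, Fm01, Fm10, Fm11]
    · rw [coeff_X']; split_ifs <;> norm_num
    · rw [coeff_C]; split_ifs <;> simp [htanh]
    · rw [coeff_C_mul, coeff_X']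
      split_ifs <;> simp [htanh]
    · rcases eq_or_ne m' 0 with rfl | hm
      · simp
      · simp [coeff_one, hm, Ne.symm hm]
  · rw [heval 0 0, heval 1 1]; simp
  · rw [heval 0 0]
    simp only [Matrix.smul_apply, Matrix.cons_val', Matrix.cons_val_zero, Matrix.empty_val',
      Matrix.cons_val_fin_one, smul_eq_mul]
    calc c * Real.cosh x < 1 * Real.cosh x := by
          exact mul_lt_mul_of_pos_right hc_lt (Real.cosh_pos x)
      _ = Real.cosh x := one_mul _
  · rw [heval 0 1, heval 1 0]; simp
  · rw [heval 0 1]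
    simp only [Matrix.smul_apply, Matrix.cons_val', Matrix.cons_val_zero, Matrix.cons_val_one,
      Matrix.head_cons, Matrix.empty_val', Matrix.cons_val_fin_one, smul_eq_mul]
    calc c * Real.sinh x < 1 * Real.sinh x :=
          mul_lt_mul_of_pos_right hc_lt (Real.sinh_pos_iff.mpr hxpos)
      _ = Real.sinh x := one_mul _
  · -- coefficient of the full monomial
    have hPm : transferM n d = Pm n d n := by
      rw [hM]
      unfold Pm
      rw [List.take_of_length_le (by simp)]
    have hmu : (Finsupp.equivFunOnFinite.symm fun _ : Fin n => 1) = mu n n := by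
      unfold mu
      congr 1
      funext j
      simp [j.isLt]
    rw [hPm, hmu]
    exact (Pm_invariant d n le_rfl).2
  · -- constant coefficient of the (1,1) entry
    have : coeff (0 : Fin n →₀ ℕ) (transferM n d 1 1) =
        constantCoeff (transferM n d 1 1) := by rw [constantCoeff_eq]
    rw [this]
    have hmap : (RingHom.mapMatrix (constantCoeff :
        MvPolynomial (Fin n) ℝ →+* ℝ)) (transferM n d) =
        ((List.ofFn fun j : Fin n => !![(0:ℝ), d j; 0, 1]).reverse).prod := by
      rw [hM, map_list_prod, List.map_reverse, List.map_ofFn]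
      have hfn : ((RingHom.mapMatrix (constantCoeff :
          MvPolynomial (Fin n) ℝ →+* ℝ)) ∘ Fm n d) =
          fun j : Fin n => !![(0:ℝ), d j; 0, 1] := by
        funext j
        simp only [Function.comp_apply, RingHom.mapMatrix_apply]
        exact map_Fm_cc d j
      rw [hfn]
    have h11 : constantCoeff (transferM n d 1 1) =
        ((List.ofFn fun j : Fin n => !![(0:ℝ), d j; 0, 1]).reverse).prod 1 1 := by
      rw [← hmap]
      simp [RingHom.mapMatrix_apply, Matrix.map_apply]
    rw [h11]
    refine (row_inv _ ?_).2
    intro M hMl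
    rw [List.mem_reverse, List.mem_ofFn] at hMl
    obtain ⟨p, rfl⟩ := hMl
    constructor <;> simp

end
end

section
/- For every x with 0 < x < log(2 + √3) one has f_1(x) ≤ sinh x / (2 − cosh x); that is, for every partition t ∈ A_x, ‖R(t)‖ ≤ sinh x / (2 − cosh x). -/
noncomputable section

/-- The Möbius substitution `γ(τ) : z ↦ (z + tanh τ)/(1 + tanh τ · z)` acting on formal
power series; the denominator has constant term `1`, hence is invertible, and the division
is carried out in the ring of formal power series. -/
def gam (τ : ℝ) (z : MvPowerSeries ℕ ℝ) : MvPowerSeries ℕ ℝ :=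
  (z + MvPowerSeries.C (σ := ℕ) (R := ℝ) (Real.tanh τ)) * (1 + MvPowerSeries.C (σ := ℕ) (R := ℝ) (Real.tanh τ) * z)⁻¹

/-- `Rser t n` is the formal power series
`R(t₁,…,tₙ) = (γ(tₙ) ∘ α(q_{n-1}) ∘ γ(t_{n-1}) ∘ ⋯ ∘ α(q₁) ∘ γ(t₁))(0)` in the variables
`q₁,…,q_{n-1}`, where `α(q)` is multiplication by `q` (Lean `t k` is the paper's `t_{k+1}`,
and the variable `X k` is the paper's `q_k`; note `X 0` is multiplied into `0`, so it does
not occur). -/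
def Rser (t : ℕ → ℝ) : ℕ → MvPowerSeries ℕ ℝ
  | 0 => 0
  | n + 1 => gam (t n) (MvPowerSeries.X n * Rser t n)

/-- The norm `‖F‖ ∈ [0,∞]` of a formal power series `F = Σ_j a_j q^j`: the sum of the
absolute values of its coefficients. -/
def psNorm (F : MvPowerSeries ℕ ℝ) : ENNReal :=
  ∑' j : ℕ →₀ ℕ, ENNReal.ofReal |MvPowerSeries.coeff (R := ℝ) j F|

/-- `fF r x = sup_{t ∈ A_x} ‖R(t)^r‖ ∈ [0,∞]`, the supremum over all partitions
`t = (t₁,…,tₙ)`, `n ≥ 1`, of positive reals with `t₁ + ⋯ + tₙ = x`. -/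
def fF (r : ℕ) (x : ℝ) : ENNReal :=
  ⨆ (n : ℕ) (t : ℕ → ℝ) (_ : 1 ≤ n) (_ : ∀ i < n, 0 < t i)
    (_ : ∑ i ∈ Finset.range n, t i = x), psNorm (Rser t n ^ r)

section Aux

open MvPowerSeries Real Set

def mydeg (j : ℕ →₀ ℕ) : ℕ := j.sum fun _ e => e

def pnP (P : (ℕ →₀ ℕ) → Prop) [DecidablePred P] (F : MvPowerSeries ℕ ℝ) : ENNReal :=
  ∑' j : ℕ →₀ ℕ, if P j then ENNReal.ofReal |MvPowerSeries.coeff (R := ℝ) j F| else 0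

lemma pnP_le_psNorm (P : (ℕ →₀ ℕ) → Prop) [DecidablePred P] (F : MvPowerSeries ℕ ℝ) :
    pnP P F ≤ psNorm F := by
  refine ENNReal.tsum_le_tsum fun j => ?_
  split_ifs <;> simp

lemma psNorm_eq_pnP (F : MvPowerSeries ℕ ℝ) : psNorm F = pnP (fun _ => True) F := by
  simp [psNorm, pnP]

lemma tsum_antidiagonal_eq (f : (ℕ →₀ ℕ) × (ℕ →₀ ℕ) → ENNReal) :
    ∑' j : ℕ →₀ ℕ, ∑ p ∈ Finset.HasAntidiagonal.antidiagonal j, f p = ∑' p, f p := by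
  have h1 : ∀ j : ℕ →₀ ℕ, ∑ p ∈ Finset.HasAntidiagonal.antidiagonal j, f p
      = ∑' p : (ℕ →₀ ℕ) × (ℕ →₀ ℕ), if p.1 + p.2 = j then f p else 0 := by
    intro j
    rw [tsum_eq_sum (s := Finset.HasAntidiagonal.antidiagonal j) (fun p hp => by
      rw [if_neg]; rwa [Finset.HasAntidiagonal.mem_antidiagonal] at hp)]
    refine Finset.sum_congr rfl fun p hp => ?_
    rw [if_pos (Finset.HasAntidiagonal.mem_antidiagonal.mp hp)]
  simp_rw [h1]
  rw [ENNReal.tsum_comm]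
  congr 1
  funext p
  simp_rw [eq_comm (a := p.1 + p.2)]
  exact tsum_ite_eq _ _

lemma pnP_mul_le (P Q : (ℕ →₀ ℕ) → Prop) [DecidablePred P] [DecidablePred Q]
    (F G : MvPowerSeries ℕ ℝ)
    (h : ∀ j1 j2 : ℕ →₀ ℕ, MvPowerSeries.coeff (R := ℝ) j2 G ≠ 0 → P (j1 + j2) → Q j1) :
    pnP P (F * G) ≤ pnP Q F * psNorm G := by
  classical
  set f : (ℕ →₀ ℕ) × (ℕ →₀ ℕ) → ENNReal := fun p =>
    (if Q p.1 then ENNReal.ofReal |MvPowerSeries.coeff (R := ℝ) p.1 F| else 0)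
      * ENNReal.ofReal |MvPowerSeries.coeff (R := ℝ) p.2 G| with hf
  have step1 : ∀ j : ℕ →₀ ℕ,
      (if P j then ENNReal.ofReal |MvPowerSeries.coeff (R := ℝ) j (F * G)| else 0)
      ≤ ∑ p ∈ Finset.HasAntidiagonal.antidiagonal j, f p := by
    intro j
    split_ifs with hP
    · calc ENNReal.ofReal |MvPowerSeries.coeff (R := ℝ) j (F * G)|
          ≤ ENNReal.ofReal (∑ p ∈ Finset.HasAntidiagonal.antidiagonal j,
              |MvPowerSeries.coeff (R := ℝ) p.1 F| * |MvPowerSeries.coeff (R := ℝ) p.2 G|) := by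
            apply ENNReal.ofReal_le_ofReal
            rw [MvPowerSeries.coeff_mul]
            refine (Finset.abs_sum_le_sum_abs _ _).trans ?_
            simp [abs_mul, le_refl]
        _ = ∑ p ∈ Finset.HasAntidiagonal.antidiagonal j,
              ENNReal.ofReal (|MvPowerSeries.coeff (R := ℝ) p.1 F| * |MvPowerSeries.coeff (R := ℝ) p.2 G|) := by
            rw [ENNReal.ofReal_sum_of_nonneg]
            intro p _
            positivity
        _ ≤ ∑ p ∈ Finset.HasAntidiagonal.antidiagonal j, f p := by
            refine Finset.sum_le_sum fun p hp => ?_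
            show _ ≤ (if Q p.1 then ENNReal.ofReal |MvPowerSeries.coeff (R := ℝ) p.1 F| else 0)
              * ENNReal.ofReal |MvPowerSeries.coeff (R := ℝ) p.2 G|
            by_cases hQ : Q p.1
            · rw [if_pos hQ, ← ENNReal.ofReal_mul (abs_nonneg _)]
            · rw [if_neg hQ, zero_mul]
              have hG : MvPowerSeries.coeff (R := ℝ) p.2 G = 0 := by
                by_contra hne
                exact hQ (h p.1 p.2 hne (by rwa [Finset.HasAntidiagonal.mem_antidiagonal.mp hp]))
              simp [hG]
    · exact zero_le
  calc pnP P (F * G) ≤ ∑' j : ℕ →₀ ℕ, ∑ p ∈ Finset.HasAntidiagonal.antidiagonal j, f p :=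
        ENNReal.tsum_le_tsum step1
    _ = ∑' p : (ℕ →₀ ℕ) × (ℕ →₀ ℕ), f p := tsum_antidiagonal_eq f
    _ = pnP Q F * psNorm G := by
        rw [show pnP Q F * psNorm G = (∑' j : ℕ →₀ ℕ,
            (if Q j then ENNReal.ofReal |MvPowerSeries.coeff (R := ℝ) j F| else 0))
            * (∑' j : ℕ →₀ ℕ, ENNReal.ofReal |MvPowerSeries.coeff (R := ℝ) j G|) from rfl]
        rw [ENNReal.tsum_prod']
        simp_rw [hf, ENNReal.tsum_mul_left, ENNReal.tsum_mul_right]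



lemma pnP_sub_le (P : (ℕ →₀ ℕ) → Prop) [DecidablePred P] (F G : MvPowerSeries ℕ ℝ) :
    pnP P (F - G) ≤ pnP P F + pnP P G := by
  rw [pnP, pnP, pnP, ← ENNReal.tsum_add]
  refine ENNReal.tsum_le_tsum fun j => ?_
  split_ifs with h
  · rw [map_sub]
    refine (ENNReal.ofReal_le_ofReal (abs_sub _ _)).trans ENNReal.ofReal_add_le
  · simp

lemma pnP_add_le (P : (ℕ →₀ ℕ) → Prop) [DecidablePred P] (F G : MvPowerSeries ℕ ℝ) :
    pnP P (F + G) ≤ pnP P F + pnP P G := by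
  rw [pnP, pnP, pnP, ← ENNReal.tsum_add]
  refine ENNReal.tsum_le_tsum fun j => ?_
  split_ifs with h
  · rw [map_add]
    refine (ENNReal.ofReal_le_ofReal (abs_add_le _ _)).trans ENNReal.ofReal_add_le
  · simp

lemma pnP_C_mul (P : (ℕ →₀ ℕ) → Prop) [DecidablePred P] (r : ℝ) (F : MvPowerSeries ℕ ℝ) :
    pnP P (MvPowerSeries.C (σ := ℕ) (R := ℝ) r * F) = ENNReal.ofReal |r| * pnP P F := by
  rw [pnP, pnP, ← ENNReal.tsum_mul_left]
  congr 1
  funext j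
  rw [MvPowerSeries.coeff_C_mul, abs_mul, ENNReal.ofReal_mul (abs_nonneg _)]
  split_ifs with h
  · rfl
  · simp

lemma psNorm_C (r : ℝ) : psNorm (MvPowerSeries.C (σ := ℕ) (R := ℝ) r) = ENNReal.ofReal |r| := by
  rw [psNorm]
  rw [tsum_eq_single (0 : ℕ →₀ ℕ) (fun j hj => by
    classical
    rw [MvPowerSeries.coeff_C, if_neg hj]
    simp)]
  classical
  rw [MvPowerSeries.coeff_C, if_pos rfl]

lemma psNorm_X (n : ℕ) : psNorm (MvPowerSeries.X n : MvPowerSeries ℕ ℝ) = 1 := by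
  rw [psNorm]
  rw [tsum_eq_single (Finsupp.single n 1) (fun j hj => by
    classical
    rw [MvPowerSeries.coeff_X, if_neg hj]
    simp)]
  classical
  rw [MvPowerSeries.coeff_X, if_pos rfl]
  simp

lemma psNorm_zero : psNorm (0 : MvPowerSeries ℕ ℝ) = 0 := by
  simp [psNorm]

lemma psNorm_mul_le (F G : MvPowerSeries ℕ ℝ) : psNorm (F * G) ≤ psNorm F * psNorm G := by
  rw [psNorm_eq_pnP (F * G), psNorm_eq_pnP F]
  exact pnP_mul_le _ _ F G (fun _ _ _ _ => trivial)

lemma psNorm_X_mul_le (n : ℕ) (F : MvPowerSeries ℕ ℝ) :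
    psNorm (MvPowerSeries.X n * F) ≤ psNorm F := by
  rw [mul_comm]
  refine (psNorm_mul_le F (MvPowerSeries.X n)).trans ?_
  rw [psNorm_X, mul_one]

/-- truncated norm by total degree -/
def pn (d : ℕ) (F : MvPowerSeries ℕ ℝ) : ENNReal := pnP (fun j => mydeg j ≤ d) F

lemma mydeg_add (j1 j2 : ℕ →₀ ℕ) : mydeg (j1 + j2) = mydeg j1 + mydeg j2 := by
  exact Finsupp.sum_add_index' (fun _ => rfl) (fun _ _ _ => rfl)

lemma mydeg_eq_zero {j : ℕ →₀ ℕ} (h : mydeg j = 0) : j = 0 := by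
  ext i
  by_cases hi : i ∈ j.support
  · rw [mydeg, Finsupp.sum, Finset.sum_eq_zero_iff] at h
    simpa using h i hi
  · simpa using Finsupp.notMem_support_iff.mp hi

lemma pn_mul_le (d : ℕ) (F G : MvPowerSeries ℕ ℝ)
    (hG : MvPowerSeries.constantCoeff (σ := ℕ) (R := ℝ) G = 0) :
    pn (d + 1) (F * G) ≤ pn d F * psNorm G := by
  refine pnP_mul_le _ _ F G fun j1 j2 hne hP => ?_
  have hj2 : j2 ≠ 0 := by
    rintro rfl
    exact hne (by simpa [MvPowerSeries.coeff_zero_eq_constantCoeff] using hG)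
  have h2 : 1 ≤ mydeg j2 := by
    rcases Nat.eq_zero_or_pos (mydeg j2) with h | h
    · exact absurd (mydeg_eq_zero h) hj2
    · exact h
  rw [mydeg_add] at hP
  omega

lemma pn_zero_mul (F G : MvPowerSeries ℕ ℝ)
    (hG : MvPowerSeries.constantCoeff (σ := ℕ) (R := ℝ) G = 0) :
    pn 0 (F * G) = 0 := by
  refine le_antisymm ?_ (zero_le)
  have h := pnP_mul_le (fun j => mydeg j ≤ 0) (fun _ => False) F G (fun j1 j2 hne hP => by
    have hj2 : j2 ≠ 0 := by
      rintro rfl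
      exact hne (by simpa [MvPowerSeries.coeff_zero_eq_constantCoeff] using hG)
    rw [mydeg_add] at hP
    exact hj2 (mydeg_eq_zero (by omega)))
  refine h.trans ?_
  have : pnP (fun _ => False) F = 0 := by simp [pnP]
  rw [this, zero_mul]

lemma psNorm_le_of_forall_pn {F : MvPowerSeries ℕ ℝ} {c : ENNReal}
    (h : ∀ d, pn d F ≤ c) : psNorm F ≤ c := by
  rw [psNorm, ENNReal.tsum_eq_iSup_sum]
  refine iSup_le fun s => ?_
  refine le_trans ?_ (h (s.sup mydeg))
  rw [pn, pnP]
  refine le_trans (le_of_eq ?_) (ENNReal.sum_le_tsum s)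
  refine Finset.sum_congr rfl fun j hj => ?_
  rw [if_pos (Finset.le_sup hj)]



lemma norm_aux (T a : ℝ) (hT : 0 ≤ T) (ha : 0 ≤ a) (hTa : a * T < 1)
    (z : MvPowerSeries ℕ ℝ) (hz0 : MvPowerSeries.constantCoeff (σ := ℕ) (R := ℝ) z = 0)
    (hz : psNorm z ≤ ENNReal.ofReal a) :
    psNorm ((z + MvPowerSeries.C (σ := ℕ) (R := ℝ) T) * (1 + MvPowerSeries.C (σ := ℕ) (R := ℝ) T * z)⁻¹)
      ≤ ENNReal.ofReal ((a + T) / (1 - a * T)) := by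
  set b := (a + T) / (1 - a * T) with hbdef
  have hden : 0 < 1 - a * T := by linarith
  have hb : 0 ≤ b := div_nonneg (by linarith) hden.le
  have hbmul : b * (1 - a * T) = a + T := div_mul_cancel₀ _ hden.ne'
  have hbeq : a + T + T * (b * a) = b := by nlinarith
  have haTb : a + T ≤ b := by nlinarith [mul_nonneg (mul_nonneg hb ha) hT]
  set A := (z + MvPowerSeries.C (σ := ℕ) (R := ℝ) T) * (1 + MvPowerSeries.C (σ := ℕ) (R := ℝ) T * z)⁻¹ with hAdef
  have hu : MvPowerSeries.constantCoeff (σ := ℕ) (R := ℝ) (1 + MvPowerSeries.C (σ := ℕ) (R := ℝ) T * z) = 1 := by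
    simp [hz0]
  have hA : A * (1 + MvPowerSeries.C (σ := ℕ) (R := ℝ) T * z) = z + MvPowerSeries.C (σ := ℕ) (R := ℝ) T := by
    rw [hAdef, mul_assoc,
      MvPowerSeries.inv_mul_cancel _ (by rw [hu]; exact one_ne_zero), mul_one]
  have hrec : A = z + MvPowerSeries.C (σ := ℕ) (R := ℝ) T - MvPowerSeries.C (σ := ℕ) (R := ℝ) T * (A * z) := by
    linear_combination hA
  have key : ∀ d, pn d A ≤ ENNReal.ofReal b := by
    intro d
    induction d with
    | zero =>
      calc pn 0 A = pn 0 (z + MvPowerSeries.C (σ := ℕ) (R := ℝ) T - MvPowerSeries.C (σ := ℕ) (R := ℝ) T * (A * z)) := by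
            rw [← hrec]
        _ ≤ pn 0 (z + MvPowerSeries.C (σ := ℕ) (R := ℝ) T) + pn 0 (MvPowerSeries.C (σ := ℕ) (R := ℝ) T * (A * z)) :=
            pnP_sub_le _ _ _
        _ ≤ (pn 0 z + pn 0 (MvPowerSeries.C (σ := ℕ) (R := ℝ) T))
              + ENNReal.ofReal |T| * pn 0 (A * z) := by
            refine add_le_add (pnP_add_le _ _ _) (le_of_eq (pnP_C_mul _ _ _))
        _ ≤ (ENNReal.ofReal a + ENNReal.ofReal T) + ENNReal.ofReal |T| * 0 := by
            refine add_le_add (add_le_add ((pnP_le_psNorm _ z).trans hz) ?_) ?_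
            · exact (pnP_le_psNorm _ _).trans (le_of_eq (by rw [psNorm_C, abs_of_nonneg hT]))
            · rw [pn_zero_mul A z hz0]
        _ ≤ ENNReal.ofReal b := by
            rw [mul_zero, add_zero, ← ENNReal.ofReal_add ha hT]
            exact ENNReal.ofReal_le_ofReal haTb
    | succ d ih =>
      calc pn (d + 1) A
          = pn (d + 1) (z + MvPowerSeries.C (σ := ℕ) (R := ℝ) T - MvPowerSeries.C (σ := ℕ) (R := ℝ) T * (A * z)) := by
            rw [← hrec]
        _ ≤ pn (d + 1) (z + MvPowerSeries.C (σ := ℕ) (R := ℝ) T)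
              + pn (d + 1) (MvPowerSeries.C (σ := ℕ) (R := ℝ) T * (A * z)) := pnP_sub_le _ _ _
        _ ≤ (pn (d + 1) z + pn (d + 1) (MvPowerSeries.C (σ := ℕ) (R := ℝ) T))
              + ENNReal.ofReal |T| * pn (d + 1) (A * z) := by
            refine add_le_add (pnP_add_le _ _ _) (le_of_eq (pnP_C_mul _ _ _))
        _ ≤ (ENNReal.ofReal a + ENNReal.ofReal T)
              + ENNReal.ofReal T * (ENNReal.ofReal b * ENNReal.ofReal a) := by
            refine add_le_add (add_le_add ((pnP_le_psNorm _ z).trans hz) ?_) ?_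
            · exact (pnP_le_psNorm _ _).trans (le_of_eq (by rw [psNorm_C, abs_of_nonneg hT]))
            · rw [abs_of_nonneg hT]
              refine mul_le_mul_right ?_ _
              exact (pn_mul_le d A z hz0).trans (mul_le_mul' ih hz)
        _ = ENNReal.ofReal b := by
            rw [← ENNReal.ofReal_mul hb, ← ENNReal.ofReal_mul hT,
              ← ENNReal.ofReal_add ha hT, ← ENNReal.ofReal_add (by linarith) (by positivity),
              hbeq]
  exact psNorm_le_of_forall_pn key



lemma tanh_le_self {τ : ℝ} (hτ : 0 ≤ τ) : Real.tanh τ ≤ τ := by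
  have mono : MonotoneOn (fun s => s * Real.cosh s - Real.sinh s) (Set.Ici 0) := by
    refine monotoneOn_of_deriv_nonneg (convex_Ici 0)
      (((continuous_id.mul Real.continuous_cosh).sub Real.continuous_sinh).continuousOn) ?_ ?_
    · intro y _
      exact (((hasDerivAt_id y).mul (Real.hasDerivAt_cosh y)).sub
        (Real.hasDerivAt_sinh y)).differentiableAt.differentiableWithinAt
    · intro y hy
      rw [interior_Ici] at hy
      have hd : HasDerivAt (fun s => s * Real.cosh s - Real.sinh s)
          (1 * Real.cosh y + y * Real.sinh y - Real.cosh y) y :=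
        ((hasDerivAt_id y).mul (Real.hasDerivAt_cosh y)).sub (Real.hasDerivAt_sinh y)
      rw [hd.deriv]
      have hs : 0 ≤ Real.sinh y := by
        rw [← Real.sinh_zero]
        exact (Real.sinh_le_sinh.mpr (le_of_lt hy))
      have := Real.cosh_pos y
      nlinarith [le_of_lt (mem_Ioi.mp hy)]
  have h0 : (0:ℝ) ∈ Set.Ici (0:ℝ) := Set.mem_Ici.mpr le_rfl
  have hmem : τ ∈ Set.Ici (0:ℝ) := Set.mem_Ici.mpr hτ
  have := mono h0 hmem hτ
  simp only [Real.cosh_zero, Real.sinh_zero, zero_mul, sub_zero, mul_zero] at this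
  rw [Real.tanh_eq_sinh_div_cosh, div_le_iff₀ (Real.cosh_pos τ)]
  linarith

lemma tanh_nonneg {τ : ℝ} (hτ : 0 ≤ τ) : 0 ≤ Real.tanh τ := by
  rw [Real.tanh_eq_sinh_div_cosh]
  refine div_nonneg ?_ (Real.cosh_pos τ).le
  rw [← Real.sinh_zero]
  exact Real.sinh_le_sinh.mpr hτ

lemma tan_prod_lt_one {σ τ : ℝ} (hσ0 : 0 ≤ σ) (hτ0 : 0 ≤ τ) (hlt : σ + τ < π / 2) :
    Real.tan σ * Real.tan τ < 1 := by
  have hc1 : 0 < Real.cos σ := Real.cos_pos_of_mem_Ioo ⟨by nlinarith [Real.pi_pos], by linarith⟩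
  have hc2 : 0 < Real.cos τ := Real.cos_pos_of_mem_Ioo ⟨by nlinarith [Real.pi_pos], by linarith⟩
  have hc3 : 0 < Real.cos (σ + τ) :=
    Real.cos_pos_of_mem_Ioo ⟨by nlinarith [Real.pi_pos], hlt⟩
  rw [Real.tan_eq_sin_div_cos, Real.tan_eq_sin_div_cos, div_mul_div_comm,
    div_lt_one (by positivity)]
  rw [Real.cos_add] at hc3
  linarith

lemma step_ineq {σ τ T : ℝ} (hσ0 : 0 ≤ σ) (hτ : 0 < τ) (hlt : σ + τ < π / 2)
    (hT0 : 0 ≤ T) (hT : T ≤ Real.tan τ) :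
    (Real.tan σ + T) / (1 - Real.tan σ * T) ≤ Real.tan (σ + τ) := by
  have hc1 : 0 < Real.cos σ := Real.cos_pos_of_mem_Ioo ⟨by nlinarith [Real.pi_pos], by linarith⟩
  have hc2 : 0 < Real.cos τ := Real.cos_pos_of_mem_Ioo ⟨by nlinarith [Real.pi_pos], by linarith⟩
  have ha : 0 ≤ Real.tan σ := Real.tan_nonneg_of_nonneg_of_le_pi_div_two hσ0 (by linarith)
  have hb : 0 ≤ Real.tan τ := Real.tan_nonneg_of_nonneg_of_le_pi_div_two hτ.le (by linarith)
  have hab : Real.tan σ * Real.tan τ < 1 := tan_prod_lt_one hσ0 hτ.le hlt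
  have haT : Real.tan σ * T ≤ Real.tan σ * Real.tan τ := mul_le_mul_of_nonneg_left hT ha
  have hden1 : 0 < 1 - Real.tan σ * T := by linarith
  have hden2 : 0 < 1 - Real.tan σ * Real.tan τ := by linarith
  have htadd : Real.tan (σ + τ)
      = (Real.tan σ + Real.tan τ) / (1 - Real.tan σ * Real.tan τ) :=
    Real.tan_add' ⟨Real.cos_ne_zero_iff.mp hc1.ne', Real.cos_ne_zero_iff.mp hc2.ne'⟩
  rw [htadd, div_le_div_iff₀ hden1 hden2]
  nlinarith [mul_nonneg (sub_nonneg.mpr hT) (sq_nonneg (Real.tan σ))]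

lemma trig_hyp {x : ℝ} (hx0 : 0 ≤ x) (hxpi : x ≤ π / 2) :
    Real.sin x * (2 - Real.cosh x) ≤ Real.cos x * Real.sinh x := by
  have hd : ∀ y : ℝ, HasDerivAt
      (fun y => Real.cos y * Real.sinh y - Real.sin y * (2 - Real.cosh y))
      (Real.cos y * (2 * Real.cosh y - 2)) y := by
    intro y
    have d1 := (Real.hasDerivAt_cos y).mul (Real.hasDerivAt_sinh y)
    have d2 := (Real.hasDerivAt_sin y).mul ((hasDerivAt_const y (2:ℝ)).sub (Real.hasDerivAt_cosh y))
    refine (d1.sub d2).congr_deriv ?_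
    simp only [Pi.sub_apply]; ring
  have mono : MonotoneOn (fun y => Real.cos y * Real.sinh y - Real.sin y * (2 - Real.cosh y))
      (Set.Icc 0 (π / 2)) := by
    refine monotoneOn_of_deriv_nonneg (convex_Icc _ _)
      (Continuous.continuousOn (by
        exact (Real.continuous_cos.mul Real.continuous_sinh).sub
          (Real.continuous_sin.mul (continuous_const.sub Real.continuous_cosh)))) ?_ ?_
    · exact fun y _ => (hd y).differentiableAt.differentiableWithinAt
    · intro y hy
      rw [interior_Icc] at hy
      rw [(hd y).deriv]
      have hc : 0 ≤ Real.cos y := (Real.cos_pos_of_mem_Ioo ⟨by nlinarith [Real.pi_pos,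
        hy.1], hy.2⟩).le
      nlinarith [Real.one_le_cosh y]
  have h0 : (0:ℝ) ∈ Set.Icc (0:ℝ) (π/2) := ⟨le_rfl, by positivity⟩
  have hx : x ∈ Set.Icc (0:ℝ) (π/2) := ⟨hx0, hxpi⟩
  have := mono h0 hx hx0
  simp only [Real.cos_zero, Real.sinh_zero, Real.sin_zero, mul_zero, one_mul, zero_mul,
    sub_zero, zero_sub, neg_zero] at this
  linarith

lemma log_lt_pi_div_two : Real.log (2 + Real.sqrt 3) < π / 2 := by
  have h3 : Real.sqrt 3 < 2 := by
    rw [show (2:ℝ) = Real.sqrt 4 by rw [show (4:ℝ) = 2^2 by norm_num, Real.sqrt_sq (by norm_num)]]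
    exact Real.sqrt_lt_sqrt (by norm_num) (by norm_num)
  have h4 : Real.log (2 + Real.sqrt 3) < Real.log 4 :=
    Real.log_lt_log (by positivity) (by linarith)
  have h5 : Real.log 4 = 2 * Real.log 2 := by
    rw [show (4:ℝ) = 2^2 by norm_num, Real.log_pow]
    norm_num
  have h6 := Real.log_two_lt_d9
  have h7 := Real.pi_gt_d6
  linarith

lemma cosh_lt_two {x : ℝ} (hx0 : 0 < x) (hx : x < Real.log (2 + Real.sqrt 3)) :
    Real.cosh x < 2 := by
  have hpos : (0:ℝ) < 2 + Real.sqrt 3 := by positivity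
  have hc : Real.cosh (Real.log (2 + Real.sqrt 3)) = 2 := by
    rw [Real.cosh_eq, Real.exp_neg, Real.exp_log hpos]
    have h3 : Real.sqrt 3 ^ 2 = 3 := Real.sq_sqrt (by norm_num)
    field_simp
    nlinarith [h3]
  have hlogpos : 0 < Real.log (2 + Real.sqrt 3) :=
    Real.log_pos (by nlinarith [Real.sqrt_nonneg 3])
  calc Real.cosh x < Real.cosh (Real.log (2 + Real.sqrt 3)) := by
        rw [Real.cosh_lt_cosh, abs_of_pos hx0, abs_of_pos hlogpos]
        exact hx
    _ = 2 := hc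



lemma Rser_le_tan (t : ℕ → ℝ) (n : ℕ) (ht : ∀ i < n, 0 < t i)
    (hsum : ∑ i ∈ Finset.range n, t i < π / 2) :
    psNorm (Rser t n) ≤ ENNReal.ofReal (Real.tan (∑ i ∈ Finset.range n, t i)) := by
  induction n with
  | zero =>
    show psNorm 0 ≤ _
    rw [psNorm_zero]
    exact zero_le
  | succ n ih =>
    have hτ : 0 < t n := ht n (Nat.lt_succ_self n)
    have hsum' : ∑ i ∈ Finset.range (n + 1), t i
        = (∑ i ∈ Finset.range n, t i) + t n := Finset.sum_range_succ t n
    set σ := ∑ i ∈ Finset.range n, t i with hσdef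
    have hσ0 : 0 ≤ σ := Finset.sum_nonneg fun i hi =>
      (ht i ((Finset.mem_range.mp hi).trans (Nat.lt_succ_self n))).le
    have hlt : σ + t n < π / 2 := by rw [hsum'] at hsum; exact hsum
    have hσlt : σ < π / 2 := by linarith
    have ihh := ih (fun i hi => ht i (hi.trans (Nat.lt_succ_self n))) hσlt
    have hz0 : MvPowerSeries.constantCoeff (σ := ℕ) (R := ℝ) (MvPowerSeries.X n * Rser t n) = 0 := by
      rw [map_mul, MvPowerSeries.constantCoeff_X, zero_mul]
    have hzn : psNorm (MvPowerSeries.X n * Rser t n) ≤ ENNReal.ofReal (Real.tan σ) :=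
      (psNorm_X_mul_le n _).trans ihh
    have hT0 : 0 ≤ Real.tanh (t n) := tanh_nonneg hτ.le
    have hTtan : Real.tanh (t n) ≤ Real.tan (t n) :=
      (tanh_le_self hτ.le).trans (Real.lt_tan hτ (by linarith)).le
    have htanσ : 0 ≤ Real.tan σ :=
      Real.tan_nonneg_of_nonneg_of_le_pi_div_two hσ0 hσlt.le
    have hprod : Real.tan σ * Real.tanh (t n) < 1 :=
      lt_of_le_of_lt (mul_le_mul_of_nonneg_left hTtan htanσ)
        (tan_prod_lt_one hσ0 hτ.le hlt)
    have happ := norm_aux (Real.tanh (t n)) (Real.tan σ) hT0 htanσ hprod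
      (MvPowerSeries.X n * Rser t n) hz0 hzn
    have hRe : Rser t (n + 1) = (MvPowerSeries.X n * Rser t n + MvPowerSeries.C (σ := ℕ) (R := ℝ)
        (Real.tanh (t n))) * (1 + MvPowerSeries.C (σ := ℕ) (R := ℝ) (Real.tanh (t n))
          * (MvPowerSeries.X n * Rser t n))⁻¹ := rfl
    rw [hRe, hsum']
    refine happ.trans (ENNReal.ofReal_le_ofReal ?_)
    exact step_ineq hσ0 hτ hlt hT0 hTtan


end Aux

/-- For `0 < x < log(2 + √3)` one has `f₁(x) ≤ sinh x / (2 − cosh x)`. -/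
theorem fF_one_le (x : ℝ) (hx : 0 < x) (hx' : x < Real.log (2 + Real.sqrt 3)) :
    fF 1 x ≤ ENNReal.ofReal (Real.sinh x / (2 - Real.cosh x)) := by

  have hpi : x < Real.pi / 2 := hx'.trans log_lt_pi_div_two
  have hcosh : Real.cosh x < 2 := cosh_lt_two hx hx'
  have htt : Real.tan x ≤ Real.sinh x / (2 - Real.cosh x) := by
    have hcos : 0 < Real.cos x := Real.cos_pos_of_mem_Ioo ⟨by nlinarith [Real.pi_pos], hpi⟩
    have key := trig_hyp hx.le hpi.le
    rw [Real.tan_eq_sin_div_cos, div_le_div_iff₀ hcos (by linarith)]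
    linarith
  rw [fF]
  refine iSup_le fun n => iSup_le fun t => iSup_le fun _ => iSup_le fun ht =>
    iSup_le fun hsum => ?_
  rw [pow_one]
  refine (Rser_le_tan t n ht (by rw [hsum]; exact hpi)).trans ?_
  rw [hsum]
  exact ENNReal.ofReal_le_ofReal htt

end
end

section
/- For every integer r ≥ 1 the function f_r is increasing: if 0 < x < y then f_r(x) ≤ f_r(y) (as elements of [0,∞]). -/
noncomputable section

/-! ### Auxiliary machinery

We define an injection `iota : ℕ ↪ ℕ` with `iota 0 = 0` and `iota k = k + 1` for `k ≥ 1`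
(so `1` is not in its range), and the induced "pullback" ring endomorphism `Phi` of
`MvPowerSeries ℕ ℝ` whose coefficient at a monomial `d` is the coefficient of the original
series at `Finsupp.embDomain iota d`.  Concretely `Phi` sets the variable `X 1` to `0` and
renames `X (k+1)` to `X k` for `k ≥ 1` (and fixes `X 0`). -/

open MvPowerSeries Finsupp

/-- The embedding `0 ↦ 0`, `k ↦ k + 1` for `k ≥ 1`. -/
def iota : ℕ ↪ ℕ :=
  ⟨fun k => if k = 0 then 0 else k + 1, by
    intro a b h
    simp only at h
    split_ifs at h <;> omega⟩

lemma iota_apply (k : ℕ) : iota k = if k = 0 then 0 else k + 1 := rfl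

lemma one_not_mem_range_iota : (1 : ℕ) ∉ Set.range iota := by
  rintro ⟨k, hk⟩
  rw [iota_apply] at hk
  split_ifs at hk <;> omega

lemma mem_range_iota_of_ne_one {m : ℕ} (h : m ≠ 1) : m ∈ Set.range iota := by
  rcases Nat.eq_zero_or_pos m with h0 | hp
  · exact ⟨0, by simp [iota_apply, h0]⟩
  · refine ⟨m - 1, ?_⟩
    rw [iota_apply]
    split_ifs <;> omega

lemma embDomain_iota_apply_one (d : ℕ →₀ ℕ) : Finsupp.embDomain iota d 1 = 0 :=
  Finsupp.embDomain_notin_range _ _ _ one_not_mem_range_iota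

/-- Every finitely supported function vanishing at `1` is in the range of
`Finsupp.embDomain iota`. -/
lemma exists_embDomain_iota {e : ℕ →₀ ℕ} (h : e 1 = 0) :
    Finsupp.embDomain iota (Finsupp.comapDomain iota e iota.injective.injOn) = e := by
  ext m
  by_cases hm : m ∈ Set.range iota
  · obtain ⟨k, rfl⟩ := hm
    rw [Finsupp.embDomain_apply_self, Finsupp.comapDomain_apply]
  · rw [Finsupp.embDomain_notin_range _ _ _ hm]
    have hm1 : m = 1 := by
      by_contra h'
      exact hm (mem_range_iota_of_ne_one h')
    rw [hm1]
    exact h.symm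

/-- The underlying function of `Phi`: pullback of coefficients along
`Finsupp.embDomain iota`. -/
def Phi0 (F : MvPowerSeries ℕ ℝ) : MvPowerSeries ℕ ℝ :=
  fun d => F (Finsupp.embDomain iota d)

lemma coeff_Phi0 (F : MvPowerSeries ℕ ℝ) (d : ℕ →₀ ℕ) :
    MvPowerSeries.coeff (R := ℝ) d (Phi0 F) = MvPowerSeries.coeff (R := ℝ) (Finsupp.embDomain iota d) F :=
  rfl

lemma Phi0_one : Phi0 1 = 1 := by
  classical
  ext d
  rw [coeff_Phi0, MvPowerSeries.coeff_one, MvPowerSeries.coeff_one]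
  by_cases hd : d = 0
  · subst hd
    rw [Finsupp.embDomain_zero]
  · rw [if_neg hd, if_neg]
    intro h
    exact hd (Finsupp.embDomain_injective iota (h.trans (Finsupp.embDomain_zero iota).symm))

lemma Phi0_mul (F G : MvPowerSeries ℕ ℝ) : Phi0 (F * G) = Phi0 F * Phi0 G := by
  classical
  ext d
  rw [coeff_Phi0, MvPowerSeries.coeff_mul, MvPowerSeries.coeff_mul]
  refine Finset.sum_nbij'
    (fun p => (Finsupp.comapDomain iota p.1 iota.injective.injOn,
      Finsupp.comapDomain iota p.2 iota.injective.injOn))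
    (fun q => (Finsupp.embDomain iota q.1, Finsupp.embDomain iota q.2)) ?_ ?_ ?_ ?_ ?_
  · intro p hp
    simp only [Finset.HasAntidiagonal.mem_antidiagonal] at hp ⊢
    have h1 : p.1 1 = 0 ∧ p.2 1 = 0 := by
      have := congrArg (fun f => f 1) hp
      simp only [Finsupp.add_apply, embDomain_iota_apply_one] at this
      omega
    apply Finsupp.embDomain_injective iota
    rw [Finsupp.embDomain_add, exists_embDomain_iota h1.1, exists_embDomain_iota h1.2, hp]
  · intro q hq
    simp only [Finset.HasAntidiagonal.mem_antidiagonal] at hq ⊢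
    rw [← Finsupp.embDomain_add, hq]
  · intro p hp
    simp only [Finset.HasAntidiagonal.mem_antidiagonal] at hp
    have h1 : p.1 1 = 0 ∧ p.2 1 = 0 := by
      have := congrArg (fun f => f 1) hp
      simp only [Finsupp.add_apply, embDomain_iota_apply_one] at this
      omega
    refine Prod.ext ?_ ?_
    · exact exists_embDomain_iota h1.1
    · exact exists_embDomain_iota h1.2
  · intro q hq
    refine Prod.ext ?_ ?_ <;>
    · ext m
      rw [Finsupp.comapDomain_apply, Finsupp.embDomain_apply_self]
  · intro p hp
    simp only [Finset.HasAntidiagonal.mem_antidiagonal] at hp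
    have h1 : p.1 1 = 0 ∧ p.2 1 = 0 := by
      have := congrArg (fun f => f 1) hp
      simp only [Finsupp.add_apply, embDomain_iota_apply_one] at this
      omega
    rw [coeff_Phi0, coeff_Phi0, exists_embDomain_iota h1.1, exists_embDomain_iota h1.2]

/-- The ring endomorphism of `MvPowerSeries ℕ ℝ` that sets `X 1 := 0` and renames
`X (k+1)` to `X k` for `k ≥ 1`; on coefficients it is the pullback along
`Finsupp.embDomain iota`. -/
def Phi : MvPowerSeries ℕ ℝ →+* MvPowerSeries ℕ ℝ where
  toFun := Phi0
  map_zero' := rfl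
  map_add' _ _ := rfl
  map_one' := Phi0_one
  map_mul' := Phi0_mul

lemma coeff_Phi (F : MvPowerSeries ℕ ℝ) (d : ℕ →₀ ℕ) :
    MvPowerSeries.coeff (R := ℝ) d (Phi F) = MvPowerSeries.coeff (R := ℝ) (Finsupp.embDomain iota d) F :=
  rfl

lemma constantCoeff_Phi (F : MvPowerSeries ℕ ℝ) :
    MvPowerSeries.constantCoeff (σ := ℕ) (R := ℝ) (Phi F) = MvPowerSeries.constantCoeff (σ := ℕ) (R := ℝ) F := by
  rw [← MvPowerSeries.coeff_zero_eq_constantCoeff_apply,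
    ← MvPowerSeries.coeff_zero_eq_constantCoeff_apply, coeff_Phi, Finsupp.embDomain_zero]

lemma Phi_C (c : ℝ) : Phi (MvPowerSeries.C (σ := ℕ) (R := ℝ) c) = MvPowerSeries.C (σ := ℕ) (R := ℝ) c := by
  classical
  ext d
  rw [coeff_Phi, MvPowerSeries.coeff_C, MvPowerSeries.coeff_C]
  by_cases hd : d = 0
  · subst hd
    rw [Finsupp.embDomain_zero]
  · rw [if_neg hd, if_neg]
    intro h
    exact hd (Finsupp.embDomain_injective iota (h.trans (Finsupp.embDomain_zero iota).symm))

lemma Phi_X_one : Phi (MvPowerSeries.X 1) = 0 := by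
  classical
  ext d
  rw [coeff_Phi, MvPowerSeries.coeff_X, map_zero, if_neg]
  intro h
  have h1 := embDomain_iota_apply_one d
  rw [h, Finsupp.single_eq_same] at h1
  exact one_ne_zero h1

lemma Phi_X_succ (k : ℕ) (hk : 1 ≤ k) :
    Phi (MvPowerSeries.X (k + 1)) = (MvPowerSeries.X k : MvPowerSeries ℕ ℝ) := by
  classical
  ext d
  rw [coeff_Phi, MvPowerSeries.coeff_X, MvPowerSeries.coeff_X]
  have hik : iota k = k + 1 := by
    rw [iota_apply, if_neg (by omega)]
  have hiff : Finsupp.embDomain iota d = Finsupp.single (k + 1) 1 ↔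
      d = Finsupp.single k 1 := by
    rw [← hik, ← Finsupp.embDomain_single, (Finsupp.embDomain_injective iota).eq_iff]
  by_cases hd : d = Finsupp.single k 1
  · rw [if_pos (hiff.mpr hd), if_pos hd]
  · rw [if_neg (fun h => hd (hiff.mp h)), if_neg hd]

lemma Phi_inv (F : MvPowerSeries ℕ ℝ) (h : MvPowerSeries.constantCoeff (σ := ℕ) (R := ℝ) F ≠ 0) :
    Phi F⁻¹ = (Phi F)⁻¹ := by
  have h' : MvPowerSeries.constantCoeff (σ := ℕ) (R := ℝ) (Phi F) ≠ 0 := by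
    rw [constantCoeff_Phi]; exact h
  rw [MvPowerSeries.eq_inv_iff_mul_eq_one h', ← map_mul,
    MvPowerSeries.inv_mul_cancel _ h, map_one]

lemma Phi_gam (τ : ℝ) (z : MvPowerSeries ℕ ℝ) (hz : MvPowerSeries.constantCoeff (σ := ℕ) (R := ℝ) z = 0) :
    Phi (gam τ z) = gam τ (Phi z) := by
  have h : MvPowerSeries.constantCoeff (σ := ℕ) (R := ℝ)
      (1 + MvPowerSeries.C (σ := ℕ) (R := ℝ) (Real.tanh τ) * z) ≠ 0 := by
    simp [hz]
  rw [gam, map_mul, map_add, Phi_C, Phi_inv _ h, map_add, map_mul, Phi_C, map_one, gam]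

lemma constantCoeff_X_mul (k : ℕ) (w : MvPowerSeries ℕ ℝ) :
    MvPowerSeries.constantCoeff (σ := ℕ) (R := ℝ) (MvPowerSeries.X k * w) = 0 := by
  rw [map_mul, MvPowerSeries.constantCoeff_X, zero_mul]

/-- The key identity: if `t'` is `t` with an extra entry prepended, then applying `Phi`
(i.e. setting the extra variable `X 1` to `0` and shifting the remaining variables down)
turns `R(t')` into `R(t)`. -/
lemma Phi_Rser (t t' : ℕ → ℝ) (hsh : ∀ i, t' (i + 1) = t i) :
    ∀ k, 1 ≤ k → Phi (Rser t' (k + 1)) = Rser t k := by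
  intro k
  induction k with
  | zero => intro hk; exact absurd hk (by norm_num)
  | succ k ih =>
    intro _
    rcases Nat.eq_zero_or_pos k with rfl | hk
    · show Phi (gam (t' 1) (MvPowerSeries.X 1 * Rser t' 1)) =
        gam (t 0) (MvPowerSeries.X 0 * Rser t 0)
      rw [Phi_gam _ _ (constantCoeff_X_mul _ _), map_mul, Phi_X_one, zero_mul, hsh 0]
      show gam (t 0) 0 = gam (t 0) (MvPowerSeries.X 0 * 0)
      rw [mul_zero]
    · show Phi (gam (t' (k + 1)) (MvPowerSeries.X (k + 1) * Rser t' (k + 1))) =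
        gam (t k) (MvPowerSeries.X k * Rser t k)
      rw [Phi_gam _ _ (constantCoeff_X_mul _ _), map_mul, Phi_X_succ k hk, ih hk, hsh k]

lemma psNorm_Phi_le (G : MvPowerSeries ℕ ℝ) : psNorm (Phi G) ≤ psNorm G := by
  rw [psNorm, psNorm]
  simp_rw [coeff_Phi]
  exact ENNReal.tsum_comp_le_tsum_of_injective (Finsupp.embDomain_injective iota) _

/-- For every integer `r ≥ 1` the function `f_r` is increasing on `(0,∞)`. -/
theorem fF_mono (r : ℕ) (hr : 1 ≤ r) (x y : ℝ) (hx : 0 < x) (hxy : x < y) :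
    fF r x ≤ fF r y := by
  rw [fF, fF]
  refine iSup_le fun n => iSup_le fun t => iSup_le fun hn => iSup_le fun hpos =>
    iSup_le fun hsum => ?_
  set t' : ℕ → ℝ := fun i => if i = 0 then y - x else t (i - 1) with ht'
  have hshift : ∀ i, t' (i + 1) = t i := fun i => by simp [ht']
  have hkey : Rser t n ^ r = Phi (Rser t' (n + 1) ^ r) := by
    rw [map_pow, Phi_Rser t t' hshift n hn]
  have h1 : psNorm (Rser t n ^ r) ≤ psNorm (Rser t' (n + 1) ^ r) := by
    rw [hkey]
    exact psNorm_Phi_le _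
  refine h1.trans ?_
  refine le_iSup_of_le (n + 1) (le_iSup_of_le t' (le_iSup_of_le (by omega)
    (le_iSup_of_le ?_ (le_iSup_of_le ?_ le_rfl))))
  · intro i hi
    cases i with
    | zero => simpa [ht'] using sub_pos.mpr hxy
    | succ j =>
      rw [hshift]
      exact hpos j (by omega)
  · rw [Finset.sum_range_succ']
    simp only [hshift]
    rw [hsum]
    simp [ht']

end
end
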